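/- Consider the six single-qubit states |φ_1⟩ = |0⟩, |φ_2⟩ = |1⟩, |φ_3⟩ = |+⟩, |φ_4⟩ = |−⟩, |φ_5⟩ = (|0⟩+i|1⟩)/√2, |φ_6⟩ = (|0⟩−i|1⟩)/√2. For every quantum channel Φ from 2×2 complex matrices to 4×4 complex matrices (given by Kraus operators A_i with Σ_i A_i*A_i = I), the average cloning success probability (1/6) Σ_{k=1}^{6} ⟨φ_k ⊗ φ_k| Φ(|φ_k⟩⟨φ_k|) |φ_k ⊗ φ_k⟩ is at most 2/3. -/
import Mathlib


open Matrix

/-- The six single-qubit states `|0⟩, |1⟩, |+⟩, |−⟩, (|0⟩+i|1⟩)/√2, (|0⟩−i|1⟩)/√2`. -/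
noncomputable def sixStates : Fin 6 → (Fin 2 → ℂ)
  | 0 => ![1, 0]
  | 1 => ![0, 1]
  | 2 => ![(Real.sqrt 2 : ℂ)⁻¹, (Real.sqrt 2 : ℂ)⁻¹]
  | 3 => ![(Real.sqrt 2 : ℂ)⁻¹, -(Real.sqrt 2 : ℂ)⁻¹]
  | 4 => ![(Real.sqrt 2 : ℂ)⁻¹, Complex.I * (Real.sqrt 2 : ℂ)⁻¹]
  | 5 => ![(Real.sqrt 2 : ℂ)⁻¹, -(Complex.I * (Real.sqrt 2 : ℂ)⁻¹)]

/-- Tensor product of two qubit vectors, as a vector on `Fin 2 × Fin 2`. -/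
def tens (u v : Fin 2 → ℂ) : Fin 2 × Fin 2 → ℂ := fun p => u p.1 * v p.2

open Complex in
lemma sos_id (a b c d e f g h : ℂ) :
    normSq a + normSq h
    + (1/8) * normSq (a+b+c+d+e+f+g+h)
    + (1/8) * normSq (a-c-e+g-b+d+f-h)
    + (1/8) * normSq (a - I*c - I*e - g + I*b + d + f - I*h)
    + (1/8) * normSq (a + I*c + I*e - g - I*b + d + f + I*h)
    + ((3/2) * normSq g + (3/2) * normSq b + (1/2) * normSq (a-d-f)
        + normSq (d-f) + (1/2) * normSq (c+e-h) + normSq (c-e))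
    = 2 * (normSq a + normSq b + normSq c + normSq d + normSq e + normSq f
        + normSq g + normSq h) := by
  simp only [Complex.normSq_apply, Complex.add_re, Complex.add_im, Complex.sub_re,
    Complex.sub_im, Complex.mul_re, Complex.mul_im, Complex.I_re, Complex.I_im,
    Complex.neg_re, Complex.neg_im]
  ring

lemma key (A : Matrix (Fin 2 × Fin 2) (Fin 2) ℂ) :
    ∑ k : Fin 6, Complex.normSq
      (star (tens (sixStates k) (sixStates k)) ⬝ᵥ A.mulVec (sixStates k))
    ≤ 2 * (Complex.normSq (A (0,0) 0) + Complex.normSq (A (0,0) 1)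
        + Complex.normSq (A (0,1) 0) + Complex.normSq (A (0,1) 1)
        + Complex.normSq (A (1,0) 0) + Complex.normSq (A (1,0) 1)
        + Complex.normSq (A (1,1) 0) + Complex.normSq (A (1,1) 1)) := by
  obtain ⟨a, b, c, d, e, f, g, h, ha, hb, hc, hd, he, hf, hg, hh⟩ :
      ∃ a b c d e f g h : ℂ, A (0,0) 0 = a ∧ A (0,0) 1 = b ∧ A (0,1) 0 = c ∧
        A (0,1) 1 = d ∧ A (1,0) 0 = e ∧ A (1,0) 1 = f ∧ A (1,1) 0 = g ∧ A (1,1) 1 = h :=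
    ⟨_, _, _, _, _, _, _, _, rfl, rfl, rfl, rfl, rfl, rfl, rfl, rfl⟩
  set s : ℂ := (Real.sqrt 2 : ℂ)⁻¹ with hs
  have hdot : ∀ u : Fin 2 → ℂ,
      star (tens u u) ⬝ᵥ A.mulVec u
      = (starRingEnd ℂ) (u 0) * (starRingEnd ℂ) (u 0) * (a * u 0 + b * u 1)
      + (starRingEnd ℂ) (u 0) * (starRingEnd ℂ) (u 1) * (c * u 0 + d * u 1)
      + (starRingEnd ℂ) (u 1) * (starRingEnd ℂ) (u 0) * (e * u 0 + f * u 1)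
      + (starRingEnd ℂ) (u 1) * (starRingEnd ℂ) (u 1) * (g * u 0 + h * u 1) := by
    intro u
    simp only [tens, dotProduct, mulVec, Fintype.sum_prod_type, Fin.sum_univ_two,
      Pi.star_apply, Complex.star_def, _root_.map_mul,
      ← Prod.mk_zero_zero, ← Prod.mk_one_one, ha, hb, hc, hd, he, hf, hg, hh]
    ring
  have hscj : (starRingEnd ℂ) s = s := by
    simp [hs, map_inv₀, Complex.conj_ofReal]
  have hIcj : (starRingEnd ℂ) Complex.I = -Complex.I := Complex.conj_I
  have hII : Complex.I * Complex.I = -1 := Complex.I_mul_I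
  have hns : Complex.normSq (s * s * s) = 1/8 := by
    have h1 : Complex.normSq s = 1/2 := by
      rw [hs, map_inv₀]
      norm_num [Complex.normSq_ofReal, Real.mul_self_sqrt]
    simp only [_root_.map_mul, h1]; norm_num
  rw [Fin.sum_univ_six]
  have e0 : star (tens (sixStates 0) (sixStates 0)) ⬝ᵥ A.mulVec (sixStates 0) = a := by
    rw [show sixStates 0 = ![1,0] from rfl, hdot]; simp
  have e1 : star (tens (sixStates 1) (sixStates 1)) ⬝ᵥ A.mulVec (sixStates 1) = h := by
    rw [show sixStates 1 = ![0,1] from rfl, hdot]; simp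
  have e2 : star (tens (sixStates 2) (sixStates 2)) ⬝ᵥ A.mulVec (sixStates 2)
      = s*s*s * (a+b+c+d+e+f+g+h) := by
    rw [show sixStates 2 = ![s,s] from rfl, hdot]
    simp only [Matrix.cons_val_zero, Matrix.cons_val_one, Matrix.head_cons, hscj]
    ring
  have e3 : star (tens (sixStates 3) (sixStates 3)) ⬝ᵥ A.mulVec (sixStates 3)
      = s*s*s * (a-c-e+g-b+d+f-h) := by
    rw [show sixStates 3 = ![s,-s] from rfl, hdot]
    simp only [Matrix.cons_val_zero, Matrix.cons_val_one, Matrix.head_cons, map_neg, hscj]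
    ring
  have e4 : star (tens (sixStates 4) (sixStates 4)) ⬝ᵥ A.mulVec (sixStates 4)
      = s*s*s * (a - Complex.I*c - Complex.I*e - g + Complex.I*b + d + f - Complex.I*h) := by
    rw [show sixStates 4 = ![s, Complex.I * s] from rfl, hdot]
    simp only [Matrix.cons_val_zero, Matrix.cons_val_one, Matrix.head_cons, map_neg,
      _root_.map_mul, hscj, hIcj]
    linear_combination ((Real.sqrt 2:ℂ)⁻¹^3 * (-d - f + g + Complex.I*h)) * Complex.I_sq
  have e5 : star (tens (sixStates 5) (sixStates 5)) ⬝ᵥ A.mulVec (sixStates 5)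
      = s*s*s * (a + Complex.I*c + Complex.I*e - g - Complex.I*b + d + f + Complex.I*h) := by
    rw [show sixStates 5 = ![s, -(Complex.I * s)] from rfl, hdot]
    simp only [Matrix.cons_val_zero, Matrix.cons_val_one, Matrix.head_cons, map_neg,
      _root_.map_mul, hscj, hIcj]
    linear_combination ((Real.sqrt 2:ℂ)⁻¹^3 * (-d - f + g - Complex.I*h)) * Complex.I_sq
  have hnss : Complex.normSq s = 1/2 := by
    rw [hs, map_inv₀]
    norm_num [Complex.normSq_ofReal, Real.mul_self_sqrt]
  rw [e0, e1, e2, e3, e4, e5, ha, hb, hc, hd, he, hf, hg, hh]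
  simp only [_root_.map_mul, hnss]
  have hid := sos_id a b c d e f g h
  have n1 := Complex.normSq_nonneg g
  have n2 := Complex.normSq_nonneg b
  have n3 := Complex.normSq_nonneg (a-d-f)
  have n4 := Complex.normSq_nonneg (d-f)
  have n5 := Complex.normSq_nonneg (c+e-h)
  have n6 := Complex.normSq_nonneg (c-e)
  ring_nf
  ring_nf at hid n1 n2 n3 n4 n5 n6
  linarith [hid, n1, n2, n3, n4, n5, n6]

/-- For every quantum channel from qubits to two qubits (given by Kraus operators
`A i` with `∑ i, (A i)ᴴ * A i = 1`), the average cloning success probability over the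
six states, namely `(1/6) ∑ k ⟨φ_k ⊗ φ_k| Φ(|φ_k⟩⟨φ_k|) |φ_k ⊗ φ_k⟩
= (1/6) ∑ k ∑ i |⟨φ_k ⊗ φ_k| A i |φ_k⟩|²`, is at most `2/3`. -/
theorem sixState_counterfeit_bound {ι : Type} [Fintype ι]
    (A : ι → Matrix (Fin 2 × Fin 2) (Fin 2) ℂ)
    (hA : ∑ i, (A i)ᴴ * A i = 1) :
    (1 / 6 : ℝ) * ∑ k : Fin 6, ∑ i,
        Complex.normSq
          (star (tens (sixStates k) (sixStates k)) ⬝ᵥ (A i).mulVec (sixStates k))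
      ≤ 2 / 3 := by
  have hT : ∑ i, (Complex.normSq (A i (0,0) 0) + Complex.normSq (A i (0,0) 1)
        + Complex.normSq (A i (0,1) 0) + Complex.normSq (A i (0,1) 1)
        + Complex.normSq (A i (1,0) 0) + Complex.normSq (A i (1,0) 1)
        + Complex.normSq (A i (1,1) 0) + Complex.normSq (A i (1,1) 1)) = 2 := by
    have h0 : (∑ i, (A i)ᴴ * A i) 0 0 = 1 := by rw [hA]; simp [Matrix.one_apply]
    have h1 : (∑ i, (A i)ᴴ * A i) 1 1 = 1 := by rw [hA]; simp [Matrix.one_apply]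
    have hexp : ∀ (j : Fin 2) (i : ι), ((A i)ᴴ * A i) j j
        = ((Complex.normSq (A i (0,0) j) + Complex.normSq (A i (0,1) j)
          + Complex.normSq (A i (1,0) j) + Complex.normSq (A i (1,1) j) : ℝ) : ℂ) := by
      intro j i
      simp only [Matrix.mul_apply, Matrix.conjTranspose_apply, Fintype.sum_prod_type,
        Fin.sum_univ_two, ← Prod.mk_zero_zero, ← Prod.mk_one_one, Complex.star_def]
      simp only [← Complex.normSq_eq_conj_mul_self]
      push_cast
      ring
    have hc : ((∑ i, (Complex.normSq (A i (0,0) 0) + Complex.normSq (A i (0,0) 1)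
        + Complex.normSq (A i (0,1) 0) + Complex.normSq (A i (0,1) 1)
        + Complex.normSq (A i (1,0) 0) + Complex.normSq (A i (1,0) 1)
        + Complex.normSq (A i (1,1) 0) + Complex.normSq (A i (1,1) 1)) : ℝ) : ℂ) = 2 := by
      have hterm : ∀ i : ι, ((Complex.normSq (A i (0,0) 0) + Complex.normSq (A i (0,0) 1)
          + Complex.normSq (A i (0,1) 0) + Complex.normSq (A i (0,1) 1)
          + Complex.normSq (A i (1,0) 0) + Complex.normSq (A i (1,0) 1)
          + Complex.normSq (A i (1,1) 0) + Complex.normSq (A i (1,1) 1) : ℝ) : ℂ)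
          = ((A i)ᴴ * A i) 0 0 + ((A i)ᴴ * A i) 1 1 := by
        intro i
        rw [hexp 0 i, hexp 1 i]
        push_cast
        ring
      rw [Complex.ofReal_sum]
      simp only [hterm]
      rw [Finset.sum_add_distrib, ← Matrix.sum_apply 0 0 Finset.univ,
        ← Matrix.sum_apply 1 1 Finset.univ, h0, h1]
      norm_num
    exact_mod_cast hc
  have hswap : ∑ k : Fin 6, ∑ i, Complex.normSq
          (star (tens (sixStates k) (sixStates k)) ⬝ᵥ (A i).mulVec (sixStates k))
      = ∑ i, ∑ k : Fin 6, Complex.normSq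
          (star (tens (sixStates k) (sixStates k)) ⬝ᵥ (A i).mulVec (sixStates k)) :=
    Finset.sum_comm
  rw [hswap]
  have hb : ∑ i, ∑ k : Fin 6, Complex.normSq
          (star (tens (sixStates k) (sixStates k)) ⬝ᵥ (A i).mulVec (sixStates k))
      ≤ ∑ i, 2 * (Complex.normSq (A i (0,0) 0) + Complex.normSq (A i (0,0) 1)
        + Complex.normSq (A i (0,1) 0) + Complex.normSq (A i (0,1) 1)
        + Complex.normSq (A i (1,0) 0) + Complex.normSq (A i (1,0) 1)
        + Complex.normSq (A i (1,1) 0) + Complex.normSq (A i (1,1) 1)) :=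
    Finset.sum_le_sum fun i _ => key (A i)
  rw [← Finset.mul_sum, hT] at hb
  linarith
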